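/- For every real γ ∈ (1/2, 1] with binary expansion γ = Σ_{k≥1} ε_k 2^{-k} containing infinitely many 1's, the series f(γ) = Σ_{m≥1} (⌈2^m γ⌉ - 2^m γ)/(2^m γ) converges and equals 1/γ + 1 - (1/γ)·Σ_{k≥1} k·ε_k·2^{-k}. -/

import Mathlib

/-- For `γ ∈ (1/2,1]` with binary expansion `γ = Σ_{k≥1} ε_k 2^{-k}` containing
infinitely many 1's, the series `f(γ) = Σ_{m≥1} (⌈2^m γ⌉ - 2^m γ)/(2^m γ)` converges
and equals `1/γ + 1 - (1/γ)·Σ_{k≥1} k ε_k 2^{-k}`. -/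
theorem stmt_13 (γ : ℝ) (hγ : γ ∈ Set.Ioc (1 / 2 : ℝ) 1) (ε : ℕ → ℝ)
    (hε0 : ε 0 = 0) (hbit : ∀ k, ε k = 0 ∨ ε k = 1)
    (hexp : HasSum (fun k : ℕ => ε k / 2 ^ k) γ)
    (hinf : ∀ m : ℕ, ∃ k > m, ε k = 1) :
    HasSum (fun m : ℕ => ((⌈(2 : ℝ) ^ (m + 1) * γ⌉ : ℝ) - 2 ^ (m + 1) * γ) /
        ((2 : ℝ) ^ (m + 1) * γ))
      (1 / γ + 1 - (1 / γ) * ∑' k : ℕ, (k : ℝ) * ε k / 2 ^ k) := by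
  obtain ⟨hγhalf, hγ1⟩ := hγ
  have hγpos : 0 < γ := lt_trans (by norm_num) hγhalf
  have hγne : γ ≠ 0 := ne_of_gt hγpos
  set a : ℕ → ℝ := fun k => ε k / 2 ^ k with ha_def
  have hεnn : ∀ k, 0 ≤ ε k := fun k => by rcases hbit k with h | h <;> simp [h]
  have hεle : ∀ k, ε k ≤ 1 := fun k => by rcases hbit k with h | h <;> simp [h]
  have hann : ∀ k, 0 ≤ a k := fun k => div_nonneg (hεnn k) (by positivity)
  have hale : ∀ k, a k ≤ (1 / 2) ^ k := by
    intro k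
    rw [ha_def]
    simp only [div_pow, one_pow]
    exact div_le_div_of_nonneg_right (hεle k) (by positivity) |>.trans_eq rfl
  have hsa : Summable a := hexp.summable
  have hTsummable : ∀ n, Summable (fun k => a (k + n)) :=
    fun n => (summable_nat_add_iff n).2 hsa
  set T : ℕ → ℝ := fun n => ∑' k, a (k + n) with hTdef
  have hTsum : ∀ n, HasSum (fun k => a (k + n)) (T n) := fun n => (hTsummable n).hasSum
  have hTnn : ∀ n, 0 ≤ T n := fun n => tsum_nonneg fun k => hann _
  have hgeo : ∀ n : ℕ, HasSum (fun k : ℕ => (1 / 2 : ℝ) ^ (k + n)) ((1 / 2) ^ n * 2) := by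
    intro n
    have h := hasSum_geometric_of_lt_one (by norm_num : (0:ℝ) ≤ 1 / 2) (by norm_num)
    have h2 : ((1 : ℝ) - 1 / 2)⁻¹ = 2 := by norm_num
    rw [h2] at h
    have := h.mul_left ((1 / 2 : ℝ) ^ n)
    simpa [pow_add, mul_comm] using this
  have hTle : ∀ n, T n ≤ (1 / 2) ^ n * 2 :=
    fun n => hasSum_le (fun k => hale (k + n)) (hTsum n) (hgeo n)
  have hTrec : ∀ n, T n = a n + T (n + 1) := by
    intro n
    have h1 := Summable.tsum_eq_zero_add (hTsummable n)
    simp only [zero_add] at h1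
    rw [hTdef]
    simp only []
    rw [h1]
    congr 1
    exact tsum_congr fun k => by rw [show k + 1 + n = k + (n + 1) by omega]
  have hTpart : ∀ n, γ = (∑ k ∈ Finset.range n, a k) + T n := by
    intro n
    have h := (hasSum_nat_add_iff (f := a) n).1 (hTsum n)
    have := h.unique hexp
    linarith [this]
  have hTpos : ∀ n, 0 < T n := by
    intro n
    obtain ⟨k, hk, hk1⟩ := hinf n
    have hak : 0 < a (k - n + n) := by
      rw [show k - n + n = k from Nat.sub_add_cancel hk.le, ha_def]
      simp only [hk1]
      positivity
    exact Summable.tsum_pos (hTsummable n) (fun j => hann _) (k - n) hak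
  -- the key pointwise identity
  have hceil : ∀ m : ℕ, ((⌈(2 : ℝ) ^ (m + 1) * γ⌉ : ℝ) - 2 ^ (m + 1) * γ) /
      ((2 : ℝ) ^ (m + 1) * γ) = (1 / γ) * ((1 / 2) ^ (m + 1) - T (m + 2)) := by
    intro m
    set N : ℤ := ∑ k ∈ Finset.range (m + 2), (if ε k = 1 then 2 ^ (m + 1 - k) else 0) with hN
    have hcast : (N : ℝ) = ∑ k ∈ Finset.range (m + 2), 2 ^ (m + 1) * a k := by
      rw [hN]
      push_cast
      refine Finset.sum_congr rfl fun k hk => ?_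
      have hk' : k ≤ m + 1 := by
        have := Finset.mem_range.1 hk; omega
      rcases hbit k with h | h
      · simp [ha_def, h]
      · simp only [h, if_pos rfl, if_true, ha_def]
        rw [pow_sub₀ (2 : ℝ) two_ne_zero hk']
        field_simp
    have hsplit : (2 : ℝ) ^ (m + 1) * γ = (N : ℝ) + 2 ^ (m + 1) * T (m + 2) := by
      rw [hcast, hTpart (m + 2), mul_add, Finset.mul_sum]
    have hSpos : 0 < (2 : ℝ) ^ (m + 1) * T (m + 2) :=
      mul_pos (by positivity) (hTpos _)
    have hSle : (2 : ℝ) ^ (m + 1) * T (m + 2) ≤ 1 := by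
      have h1 : (2 : ℝ) ^ (m + 1) * T (m + 2) ≤ 2 ^ (m + 1) * ((1 / 2) ^ (m + 2) * 2) :=
        mul_le_mul_of_nonneg_left (hTle (m + 2)) (by positivity)
      have h2 : (2 : ℝ) ^ (m + 1) * ((1 / 2) ^ (m + 2) * 2) = 1 := by
        simp only [div_pow, one_pow]
        field_simp
        ring
      linarith
    have hceilN : ⌈(2 : ℝ) ^ (m + 1) * γ⌉ = N + 1 := by
      rw [hsplit, add_comm, Int.ceil_add_intCast]
      have : ⌈(2 : ℝ) ^ (m + 1) * T (m + 2)⌉ = 1 := by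
        rw [Int.ceil_eq_iff]
        constructor
        · push_cast; linarith
        · push_cast; linarith
      omega
    rw [hceilN]
    push_cast
    have h1 : ((N : ℝ) + 1) - 2 ^ (m + 1) * γ = 1 - 2 ^ (m + 1) * T (m + 2) := by
      rw [hsplit]; ring
    rw [h1]
    have e1 : (1 / 2 : ℝ) ^ (m + 1) - T (m + 2)
        = (1 - 2 ^ (m + 1) * T (m + 2)) / 2 ^ (m + 1) := by
      rw [div_pow, one_pow]; field_simp
    rw [e1, one_div_mul_eq_div, div_div]
  -- summability of k * ε k / 2^k
  have hKsummable : Summable (fun k : ℕ => (k : ℝ) * ε k / 2 ^ k) := by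
    have hgs : Summable (fun k : ℕ => (k : ℝ) * (1 / 2) ^ k) := by
      simpa using summable_pow_mul_geometric_of_norm_lt_one (R := ℝ) 1
        (r := 1 / 2) (by norm_num [Real.norm_eq_abs, abs_of_pos])
    refine Summable.of_nonneg_of_le (fun k => by have := hεnn k; positivity) (fun k => ?_) hgs
    rw [mul_div_assoc]
    simp only [div_pow, one_pow]
    gcongr
    exact hεle k
  set K : ℝ := ∑' k : ℕ, (k : ℝ) * ε k / 2 ^ k with hKdef
  have hKsum : HasSum (fun k : ℕ => (k : ℝ) * ε k / 2 ^ k) K := hKsummable.hasSum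
  -- HasSum for b n = (n+1) * a (n+2)
  have hb : HasSum (fun n : ℕ => ((n : ℝ) + 1) * a (n + 2)) (K - γ) := by
    have hc2 := (hasSum_nat_add_iff' (f := fun k : ℕ => (k : ℝ) * ε k / 2 ^ k) 2).2 hKsum
    have ha2 := (hasSum_nat_add_iff' (f := a) 2).2 hexp
    have hsub := hc2.sub ha2
    have hfun : ∀ n : ℕ, ((n : ℝ) + 1) * a (n + 2)
        = ((n + 2 : ℕ) : ℝ) * ε (n + 2) / 2 ^ (n + 2) - a (n + 2) := by
      intro n
      rw [ha_def]
      push_cast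
      ring
    have hval : K - (∑ i ∈ Finset.range 2, (i : ℝ) * ε i / 2 ^ i)
        - (γ - ∑ i ∈ Finset.range 2, a i) = K - γ := by
      rw [ha_def]
      simp [Finset.sum_range_succ, hε0]
    rw [← hval]
    exact hsub.congr_fun hfun
  -- partial sum identity
  have hpart : ∀ M : ℕ, ∑ m ∈ Finset.range M, T (m + 2)
      = (M : ℝ) * T (M + 2) + ∑ n ∈ Finset.range M, ((n : ℝ) + 1) * a (n + 2) := by
    intro M
    induction M with
    | zero => simp
    | succ M ih =>
      rw [Finset.sum_range_succ, ih, Finset.sum_range_succ]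
      have hr := hTrec (M + 2)
      push_cast
      rw [show M + 1 + 2 = M + 2 + 1 from rfl, hr]
      ring
  -- the boundary term tends to 0
  have hb0 : Filter.Tendsto (fun M : ℕ => (M : ℝ) * T (M + 2)) Filter.atTop (nhds 0) := by
    have hgsum : Summable (fun M : ℕ => (M : ℝ) * ((1 / 2) ^ (M + 2) * 2)) := by
      have : Summable (fun M : ℕ => (M : ℝ) * (1 / 2) ^ M) := by
        simpa using summable_pow_mul_geometric_of_norm_lt_one (R := ℝ) 1
          (r := 1 / 2) (by norm_num [Real.norm_eq_abs, abs_of_pos])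
      have := this.mul_right ((1 / 2 : ℝ) ^ 2 * 2)
      refine this.congr fun M => ?_
      ring
    have hgz := hgsum.tendsto_atTop_zero
    refine squeeze_zero (fun M => mul_nonneg (Nat.cast_nonneg M) (hTnn _))
      (fun M => ?_) hgz
    exact mul_le_mul_of_nonneg_left (hTle (M + 2)) (Nat.cast_nonneg M)
  -- HasSum of m ↦ T (m+2)
  have hThasSum : HasSum (fun m : ℕ => T (m + 2)) (K - γ) := by
    rw [hasSum_iff_tendsto_nat_of_nonneg (fun m => hTnn (m + 2))]
    have := hb0.add hb.tendsto_sum_nat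
    rw [zero_add] at this
    refine this.congr fun M => ?_
    rw [hpart M]
  -- geometric part
  have hgeo1 : HasSum (fun m : ℕ => (1 / 2 : ℝ) ^ (m + 1)) 1 := by
    have h := hgeo 1
    have hv : ((1 / 2 : ℝ) ^ 1 * 2) = 1 := by norm_num
    rwa [hv] at h
  have hfinal := (hgeo1.sub hThasSum).mul_left (1 / γ)
  simp only [hceil]
  rw [show (1 / γ + 1 - 1 / γ * K) = (1 / γ) * (1 - (K - γ)) from by field_simp; ring]
  exact hfinal
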